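/- Sequential update formula for covariances: let K₀ be symmetric PSD (m×m), let G₁ be p₁×m and G₂ be p₂×m matrices, and τ > 0. Define K₁ = K₀ − K₀G₁ᵀ(G₁K₀G₁ᵀ+τ²I)⁻¹G₁K₀ and K₂ = K₁ − K₁G₂ᵀ(G₂K₁G₂ᵀ+τ²I)⁻¹G₂K₁. Let G = [G₁; G₂] be the (p₁+p₂)×m vertical concatenation. Then K₂ = K₀ − K₀Gᵀ(GK₀Gᵀ + τ²I)⁻¹GK₀; that is, conditioning on the two blocks of observations sequentially yields the same covariance as conditioning on them jointly. -/

import Mathlib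

open Matrix

private lemma posDef_smul' {n : ℕ} {M : Matrix (Fin n) (Fin n) ℝ} (hM : M.PosDef)
    {c : ℝ} (hc : 0 < c) : (c • M).PosDef := by
  exact hM.smul hc

private lemma posDef_smul_one' {n : ℕ} {c : ℝ} (hc : 0 < c) :
    (c • 1 : Matrix (Fin n) (Fin n) ℝ).PosDef :=
  posDef_smul' Matrix.PosDef.one hc

private lemma posDef_noise' {n p : ℕ} {K : Matrix (Fin n) (Fin n) ℝ} (hK : K.PosSemidef)
    (H : Matrix (Fin p) (Fin n) ℝ) {τ : ℝ} (hτ : 0 < τ) :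
    (H * K * Hᵀ + τ ^ 2 • 1).PosDef := by
  have h1 : (H * K * Hᵀ).PosSemidef := by
    have := hK.mul_mul_conjTranspose_same H
    rwa [conjTranspose_eq_transpose_of_trivial] at this
  exact Matrix.PosDef.posSemidef_add h1 (posDef_smul_one' (by positivity))

private lemma push_through' {n p : ℕ} (N : Matrix (Fin p) (Fin n) ℝ) {τ : ℝ} (hτ : 0 < τ) :
    Nᵀ * (N * Nᵀ + τ ^ 2 • 1)⁻¹ = (Nᵀ * N + τ ^ 2 • 1)⁻¹ * Nᵀ := by
  have hP : (N * Nᵀ + τ ^ 2 • 1).PosDef := by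
    have h1 : (N * Nᵀ).PosSemidef := by
      have := posSemidef_conjTranspose_mul_self Nᵀ
      rwa [conjTranspose_eq_transpose_of_trivial, transpose_transpose] at this
    exact Matrix.PosDef.posSemidef_add h1 (posDef_smul_one' (by positivity))
  have hQ : (Nᵀ * N + τ ^ 2 • 1).PosDef := by
    have h1 : (Nᵀ * N).PosSemidef := by
      have := posSemidef_conjTranspose_mul_self N
      rwa [conjTranspose_eq_transpose_of_trivial] at this
    exact Matrix.PosDef.posSemidef_add h1 (posDef_smul_one' (by positivity))
  letI := hP.isUnit.invertible
  letI := hQ.isUnit.invertible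
  have key : (Nᵀ * N + τ ^ 2 • 1) * Nᵀ = Nᵀ * (N * Nᵀ + τ ^ 2 • 1) := by
    simp only [Matrix.add_mul, Matrix.mul_add, Matrix.smul_mul, Matrix.mul_smul,
      Matrix.one_mul, Matrix.mul_one, Matrix.mul_assoc]
  calc Nᵀ * (N * Nᵀ + τ ^ 2 • 1)⁻¹
      = (Nᵀ * N + τ ^ 2 • 1)⁻¹ * ((Nᵀ * N + τ ^ 2 • 1) * Nᵀ) * (N * Nᵀ + τ ^ 2 • 1)⁻¹ := by
        simp only [← Matrix.mul_assoc, Matrix.inv_mul_of_invertible, Matrix.one_mul]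
    _ = (Nᵀ * N + τ ^ 2 • 1)⁻¹ * Nᵀ * ((N * Nᵀ + τ ^ 2 • 1) * (N * Nᵀ + τ ^ 2 • 1)⁻¹) := by
        rw [key]; simp only [Matrix.mul_assoc]
    _ = (Nᵀ * N + τ ^ 2 • 1)⁻¹ * Nᵀ := by
        rw [Matrix.mul_inv_of_invertible, Matrix.mul_one]

open scoped MatrixOrder in
private lemma posSemidef_update' {n p : ℕ} {K : Matrix (Fin n) (Fin n) ℝ} (hK : K.PosSemidef)
    (H : Matrix (Fin p) (Fin n) ℝ) {τ : ℝ} (hτ : 0 < τ) :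
    (K - K * Hᵀ * (H * K * Hᵀ + τ ^ 2 • 1)⁻¹ * H * K).PosSemidef := by
  set L := CFC.sqrt K with hLdef
  have hLL : L * L = K := CFC.sqrt_mul_sqrt_self K (nonneg_iff_posSemidef.mpr hK)
  have hLH : Lᵀ = L := by
    have := (CFC.sqrt_nonneg K).posSemidef.isHermitian
    rwa [IsHermitian, conjTranspose_eq_transpose_of_trivial] at this
  set N := H * L with hN
  have hQ : (Nᵀ * N + τ ^ 2 • 1).PosDef := by
    have h1 : (Nᵀ * N).PosSemidef := by
      have := posSemidef_conjTranspose_mul_self N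
      rwa [conjTranspose_eq_transpose_of_trivial] at this
    exact Matrix.PosDef.posSemidef_add h1 (posDef_smul_one' (by positivity))
  letI := hQ.isUnit.invertible
  have hmid : (1 : Matrix (Fin n) (Fin n) ℝ) - Nᵀ * (N * Nᵀ + τ ^ 2 • 1)⁻¹ * N
      = τ ^ 2 • (Nᵀ * N + τ ^ 2 • 1)⁻¹ := by
    have h3 : (Nᵀ * N + τ ^ 2 • 1)⁻¹ * (Nᵀ * N)
        = 1 - τ ^ 2 • (Nᵀ * N + τ ^ 2 • 1)⁻¹ := by
      calc (Nᵀ * N + τ ^ 2 • 1)⁻¹ * (Nᵀ * N)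
          = (Nᵀ * N + τ ^ 2 • 1)⁻¹ * ((Nᵀ * N + τ ^ 2 • 1) - τ ^ 2 • 1) := by
            congr 1; abel
        _ = 1 - τ ^ 2 • (Nᵀ * N + τ ^ 2 • 1)⁻¹ := by
            rw [Matrix.mul_sub, Matrix.inv_mul_of_invertible, Matrix.mul_smul, Matrix.mul_one]
    rw [push_through' N hτ, Matrix.mul_assoc, h3]
    abel
  have h1 : H * K * Hᵀ = N * Nᵀ := by
    rw [hN, transpose_mul, hLH, ← hLL]
    simp only [Matrix.mul_assoc]
  have hexpr : K - K * Hᵀ * (H * K * Hᵀ + τ ^ 2 • 1)⁻¹ * H * K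
      = L * (τ ^ 2 • (Nᵀ * N + τ ^ 2 • 1)⁻¹) * Lᴴ := by
    rw [conjTranspose_eq_transpose_of_trivial, hLH, ← hmid, h1, ← hLL]
    generalize (N * Nᵀ + τ ^ 2 • 1)⁻¹ = Pi
    rw [hN, transpose_mul, hLH]
    simp only [Matrix.mul_sub, Matrix.sub_mul, Matrix.mul_one, Matrix.one_mul, Matrix.mul_assoc]
  rw [hexpr]
  exact ((posDef_smul' hQ.inv (by positivity)).posSemidef).mul_mul_conjTranspose_same L

set_option maxHeartbeats 1000000 in
/-- Sequential update formula for covariances: conditioning on two blocks of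
observations sequentially yields the same covariance as conditioning on them jointly, where
`G = [G₁; G₂]` is the vertical concatenation. -/
theorem stmt_4 {m p₁ p₂ : ℕ} (K₀ : Matrix (Fin m) (Fin m) ℝ) (hK₀ : K₀.PosSemidef)
    (G₁ : Matrix (Fin p₁) (Fin m) ℝ) (G₂ : Matrix (Fin p₂) (Fin m) ℝ)
    (τ : ℝ) (hτ : 0 < τ)
    (K₁ K₂ : Matrix (Fin m) (Fin m) ℝ)
    (hK₁ : K₁ = K₀ - K₀ * G₁ᵀ * (G₁ * K₀ * G₁ᵀ + τ ^ 2 • 1)⁻¹ * G₁ * K₀)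
    (hK₂ : K₂ = K₁ - K₁ * G₂ᵀ * (G₂ * K₁ * G₂ᵀ + τ ^ 2 • 1)⁻¹ * G₂ * K₁)
    (G : Matrix (Fin p₁ ⊕ Fin p₂) (Fin m) ℝ) (hG : G = fromRows G₁ G₂) :
    K₂ = K₀ - K₀ * Gᵀ * (G * K₀ * Gᵀ + τ ^ 2 • 1)⁻¹ * G * K₀ := by
  subst hK₂; subst hK₁; subst hG
  have hApd : (G₁ * K₀ * G₁ᵀ + τ ^ 2 • 1).PosDef := posDef_noise' hK₀ G₁ hτ
  have hK1psd := posSemidef_update' hK₀ G₁ hτ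
  have hDpd : (G₂ * (K₀ - K₀ * G₁ᵀ * (G₁ * K₀ * G₁ᵀ + τ ^ 2 • 1)⁻¹ * G₁ * K₀) * G₂ᵀ
      + τ ^ 2 • 1).PosDef := posDef_noise' hK1psd G₂ hτ
  letI iA : Invertible (G₁ * K₀ * G₁ᵀ + τ ^ 2 • 1) := hApd.isUnit.invertible
  have hSchur : (G₂ * K₀ * G₂ᵀ + τ ^ 2 • 1)
        - G₂ * K₀ * G₁ᵀ * (G₁ * K₀ * G₁ᵀ + τ ^ 2 • 1)⁻¹ * (G₁ * K₀ * G₂ᵀ)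
      = G₂ * (K₀ - K₀ * G₁ᵀ * (G₁ * K₀ * G₁ᵀ + τ ^ 2 • 1)⁻¹ * G₁ * K₀) * G₂ᵀ + τ ^ 2 • 1 := by
    have h : G₂ * (K₀ - K₀ * G₁ᵀ * (G₁ * K₀ * G₁ᵀ + τ ^ 2 • 1)⁻¹ * G₁ * K₀) * G₂ᵀ
        = G₂ * K₀ * G₂ᵀ
          - G₂ * K₀ * G₁ᵀ * (G₁ * K₀ * G₁ᵀ + τ ^ 2 • 1)⁻¹ * (G₁ * K₀ * G₂ᵀ) := by
      generalize (G₁ * K₀ * G₁ᵀ + τ ^ 2 • 1)⁻¹ = Ai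
      simp only [Matrix.mul_sub, Matrix.sub_mul, Matrix.mul_assoc]
    rw [h]; abel
  letI iSchur : Invertible ((G₂ * K₀ * G₂ᵀ + τ ^ 2 • 1)
      - G₂ * K₀ * G₁ᵀ * ⅟(G₁ * K₀ * G₁ᵀ + τ ^ 2 • 1) * (G₁ * K₀ * G₂ᵀ)) := by
    rw [invOf_eq_nonsing_inv, hSchur]; exact hDpd.isUnit.invertible
  letI iBlk : Invertible (fromBlocks (G₁ * K₀ * G₁ᵀ + τ ^ 2 • 1) (G₁ * K₀ * G₂ᵀ)
      (G₂ * K₀ * G₁ᵀ) (G₂ * K₀ * G₂ᵀ + τ ^ 2 • 1)) := fromBlocks₁₁Invertible _ _ _ _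
  have hS : fromRows G₁ G₂ * K₀ * (fromRows G₁ G₂)ᵀ + τ ^ 2 • 1
      = fromBlocks (G₁ * K₀ * G₁ᵀ + τ ^ 2 • 1) (G₁ * K₀ * G₂ᵀ)
          (G₂ * K₀ * G₁ᵀ) (G₂ * K₀ * G₂ᵀ + τ ^ 2 • 1) := by
    rw [transpose_fromRows, fromRows_mul, fromRows_mul_fromCols, ← fromBlocks_one,
      fromBlocks_smul, fromBlocks_add]
    simp only [smul_zero, add_zero]
  have hSinv : (fromRows G₁ G₂ * K₀ * (fromRows G₁ G₂)ᵀ + τ ^ 2 • 1)⁻¹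
      = fromBlocks
          ((G₁ * K₀ * G₁ᵀ + τ ^ 2 • 1)⁻¹ + (G₁ * K₀ * G₁ᵀ + τ ^ 2 • 1)⁻¹ * (G₁ * K₀ * G₂ᵀ)
            * (G₂ * (K₀ - K₀ * G₁ᵀ * (G₁ * K₀ * G₁ᵀ + τ ^ 2 • 1)⁻¹ * G₁ * K₀) * G₂ᵀ
                + τ ^ 2 • 1)⁻¹
            * (G₂ * K₀ * G₁ᵀ) * (G₁ * K₀ * G₁ᵀ + τ ^ 2 • 1)⁻¹)
          (-((G₁ * K₀ * G₁ᵀ + τ ^ 2 • 1)⁻¹ * (G₁ * K₀ * G₂ᵀ)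
            * (G₂ * (K₀ - K₀ * G₁ᵀ * (G₁ * K₀ * G₁ᵀ + τ ^ 2 • 1)⁻¹ * G₁ * K₀) * G₂ᵀ
                + τ ^ 2 • 1)⁻¹))
          (-((G₂ * (K₀ - K₀ * G₁ᵀ * (G₁ * K₀ * G₁ᵀ + τ ^ 2 • 1)⁻¹ * G₁ * K₀) * G₂ᵀ
                + τ ^ 2 • 1)⁻¹
            * (G₂ * K₀ * G₁ᵀ) * (G₁ * K₀ * G₁ᵀ + τ ^ 2 • 1)⁻¹))
          ((G₂ * (K₀ - K₀ * G₁ᵀ * (G₁ * K₀ * G₁ᵀ + τ ^ 2 • 1)⁻¹ * G₁ * K₀) * G₂ᵀ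
                + τ ^ 2 • 1)⁻¹) := by
    rw [hS, ← invOf_eq_nonsing_inv, invOf_fromBlocks₁₁_eq]
    simp only [invOf_eq_nonsing_inv]
    rw [hSchur]
  rw [hSinv, transpose_fromRows]
  simp only [mul_fromCols, fromCols_mul_fromBlocks, fromCols_mul_fromRows]
  generalize (G₁ * K₀ * G₁ᵀ + τ ^ 2 • 1)⁻¹ = Ai
  generalize (G₂ * (K₀ - K₀ * G₁ᵀ * Ai * G₁ * K₀) * G₂ᵀ + τ ^ 2 • 1)⁻¹ = Di
  simp only [Matrix.mul_sub, Matrix.sub_mul, Matrix.mul_add, Matrix.add_mul, Matrix.mul_neg,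
    Matrix.neg_mul, Matrix.mul_assoc, sub_eq_add_neg, neg_add, neg_neg]
  abel
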